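/- Let p be a prime, and suppose G is a torsion-free abelian group containing no isomorphic copy of ℚ. Then for every g ∈ G and every t ∈ ℤ_[p], there is at most one y ∈ G satisfying ψ_{p,t}(y, g), i.e., at most one y such that: for every n ∈ ℕ, p^n divides (y - (t.appr n) • g) in G, and for every integer q coprime to p, q divides y in G and q divides g in G. -/

import Mathlib

/-- A group `G` is torsion-free: `n • x ≠ 0` for every `x ≠ 0` and integer `n > 0`. -/
def IsTorsionFreeGroup (G : Type*) [AddCommGroup G] : Prop :=
  ∀ x : G, x ≠ 0 → ∀ n : ℤ, 0 < n → n • x ≠ 0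

/-- `G` contains a subgroup isomorphic to `A`. -/
def ContainsCopy (A G : Type*) [AddCommGroup A] [AddCommGroup G] : Prop :=
  ∃ f : A →+ G, Function.Injective f

/-- The formula `ψ_{p,t}(y, x)`: for every `n`, `p^n` divides `y - (t.appr n) • x` in `G`,
and every integer `q` coprime to `p` divides both `y` and `x` in `G`. -/
def PsiFormula {G : Type*} [AddCommGroup G] (p : ℕ) [Fact p.Prime]
    (t : ℤ_[p]) (y x : G) : Prop :=
  (∀ n : ℕ, ∃ z : G, ((p : ℤ) ^ n) • z = y - (t.appr n : ℤ) • x) ∧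
  (∀ q : ℤ, Int.gcd q (p : ℤ) = 1 →
    (∃ z : G, q • z = y) ∧ (∃ z : G, q • z = x))

theorem divisible_containsCopy {G : Type*} [AddCommGroup G]
    (hG : IsTorsionFreeGroup G) (d : G) (hd : d ≠ 0)
    (hdiv : ∀ n : ℤ, 0 < n → ∃ z : G, n • z = d) :
    ContainsCopy ℚ G := by
  have cancel : ∀ (n : ℤ), 0 < n → ∀ x y : G, n • x = n • y → x = y := by
    intro n hn x y h
    by_contra hxy
    exact hG (x - y) (sub_ne_zero.2 hxy) n hn (by rw [smul_sub, h, sub_self])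
  have hdpos : ∀ r : ℚ, (0:ℤ) < r.den := fun r => by exact_mod_cast r.pos
  set zf : ℚ → G := fun r => (hdiv r.den (hdpos r)).choose with hzf
  have hz : ∀ r : ℚ, (r.den : ℤ) • zf r = d := fun r => (hdiv r.den (hdpos r)).choose_spec
  have h1 : ∀ (r : ℚ) (c : ℤ), (c * r.den) • zf r = c • d := fun r c => by
    rw [mul_smul, hz]
  have key : ∀ r : ℚ, (r.num : ℚ) = r * r.den := by
    intro r
    have hden : ((r.den : ℚ)) ≠ 0 := by exact_mod_cast r.den_nz
    rw [← div_eq_iff hden]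
    exact Rat.num_div_den r
  set f : ℚ → G := fun r => r.num • zf r with hf
  have hadd : ∀ a b : ℚ, f (a + b) = f a + f b := by
    intro a b
    set q : ℚ := a + b with hq
    have hid : q.num * (a.den:ℤ) * b.den = a.num * q.den * b.den + b.num * q.den * a.den := by
      have h1 := key q; have h2 := key a; have h3 := key b
      have : ((q.num * (a.den:ℤ) * b.den : ℤ) : ℚ)
          = ((a.num * q.den * b.den + b.num * q.den * a.den : ℤ) : ℚ) := by
        push_cast
        rw [h1, h2, h3, hq]
        ring
      exact_mod_cast this
    have hN : (0:ℤ) < (q.den:ℤ) * a.den * b.den :=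
      mul_pos (mul_pos (hdpos q) (hdpos a)) (hdpos b)
    apply cancel _ hN
    have L : ((q.den:ℤ) * a.den * b.den) • f q = (q.num * a.den * b.den) • d := by
      rw [hf]
      simp only
      rw [← mul_smul, ← h1 q (q.num * a.den * b.den)]
      ring_nf
    have R : ((q.den:ℤ) * a.den * b.den) • (f a + f b)
        = (a.num * q.den * b.den + b.num * q.den * a.den) • d := by
      rw [hf]
      simp only [smul_add, add_smul]
      rw [← mul_smul, ← mul_smul,
        ← h1 a (a.num * q.den * b.den), ← h1 b (b.num * q.den * a.den)]
      ring_nf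
    rw [L, R, hid]
  set F : ℚ →+ G := AddMonoidHom.mk' f hadd with hF
  refine ⟨F, (injective_iff_map_eq_zero F).mpr ?_⟩
  intro r hr
  have : (r.num : ℤ) • d = 0 := by
    have : (r.den : ℤ) • (r.num • zf r) = 0 := by
      rw [show r.num • zf r = F r from rfl, hr, smul_zero]
    rwa [smul_comm, hz] at this
  have hnum : r.num = 0 := by
    by_contra h0
    rcases lt_or_gt_of_ne h0 with hlt | hgt
    · have : (-r.num) • d = 0 := by rw [neg_smul, this, neg_zero]
      exact hG d hd (-r.num) (by omega) this
    · exact hG d hd r.num hgt this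
  exact Rat.num_eq_zero.mp hnum

theorem psi_unique' (p : ℕ) [Fact p.Prime] (G : Type*) [AddCommGroup G]
    (hG : IsTorsionFreeGroup G) (hQ : ¬ (ContainsCopy ℚ G))
    (g : G) (t : ℤ_[p])
    (y₁ y₂ : G)
    (h₁ : (∀ n : ℕ, ∃ z : G, ((p : ℤ) ^ n) • z = y₁ - (t.appr n : ℤ) • g) ∧
      (∀ q : ℤ, Int.gcd q (p : ℤ) = 1 → (∃ z : G, q • z = y₁) ∧ (∃ z : G, q • z = g)))
    (h₂ : (∀ n : ℕ, ∃ z : G, ((p : ℤ) ^ n) • z = y₂ - (t.appr n : ℤ) • g) ∧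
      (∀ q : ℤ, Int.gcd q (p : ℤ) = 1 → (∃ z : G, q • z = y₂) ∧ (∃ z : G, q • z = g))) :
    y₁ = y₂ := by
  have hp := (Fact.out : p.Prime)
  set d : G := y₁ - y₂ with hd
  by_contra hne
  have hdne : d ≠ 0 := sub_ne_zero.2 hne
  -- p^k divides d for all k
  have hpk : ∀ k : ℕ, ∃ z : G, ((p:ℤ)^k) • z = d := by
    intro k
    obtain ⟨z₁, hz₁⟩ := h₁.1 k
    obtain ⟨z₂, hz₂⟩ := h₂.1 k
    exact ⟨z₁ - z₂, by rw [smul_sub, hz₁, hz₂, hd]; abel⟩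
  -- q coprime to p divides d
  have hq : ∀ q : ℤ, Int.gcd q (p:ℤ) = 1 → ∃ z : G, q • z = d := by
    intro q hcop
    obtain ⟨z₁, hz₁⟩ := (h₁.2 q hcop).1
    obtain ⟨z₂, hz₂⟩ := (h₂.2 q hcop).1
    exact ⟨z₁ - z₂, by rw [smul_sub, hz₁, hz₂]⟩
  apply hQ
  apply divisible_containsCopy hG d hdne
  intro n hn
  -- write n = p^k * m with m coprime to p
  lift n to ℕ using hn.le with N
  have hN : N ≠ 0 := by exact_mod_cast hn.ne'
  set k := N.factorization p with hk
  set m := N / p ^ k with hm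
  have hfac : N = p ^ k * m := (Nat.ordProj_mul_ordCompl_eq_self N p).symm
  have hcop : Nat.Coprime p m := Nat.coprime_ordCompl hp hN
  have hcopZ : Int.gcd (m : ℤ) (p : ℤ) = 1 := by
    rw [Int.gcd_natCast_natCast]
    exact (Nat.coprime_comm.mp hcop)
  obtain ⟨a, ha⟩ := hpk k
  obtain ⟨b, hb⟩ := hq (m : ℤ) hcopZ
  -- Bezout
  have hg1 : Int.gcd ((p:ℤ)^k) (m:ℤ) = 1 := by
    have : Nat.Coprime (p ^ k) m := Nat.Coprime.pow_left k hcop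
    rw [show ((p:ℤ)^k) = ((p^k : ℕ) : ℤ) by push_cast; ring, Int.gcd_natCast_natCast]
    exact this
  obtain ⟨u, v, huv⟩ : ∃ u v : ℤ, (p:ℤ)^k * u + (m:ℤ) * v = 1 := by
    refine ⟨Int.gcdA ((p:ℤ)^k) (m:ℤ), Int.gcdB ((p:ℤ)^k) (m:ℤ), ?_⟩
    have := Int.gcd_eq_gcd_ab ((p:ℤ)^k) (m:ℤ)
    rw [hg1] at this
    exact_mod_cast this.symm
  refine ⟨u • b + v • a, ?_⟩
  have hNZ : (N : ℤ) = (p:ℤ)^k * (m:ℤ) := by exact_mod_cast hfac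
  rw [hNZ, smul_add]
  calc ((p:ℤ)^k * (m:ℤ)) • (u • b) + ((p:ℤ)^k * (m:ℤ)) • (v • a)
      = u • ((p:ℤ)^k • ((m:ℤ) • b)) + v • ((m:ℤ) • ((p:ℤ)^k • a)) := by
        rw [smul_comm ((p:ℤ)^k * (m:ℤ)) u, smul_comm ((p:ℤ)^k * (m:ℤ)) v, mul_smul,
          mul_comm ((p:ℤ)^k) (m:ℤ), mul_smul]
    _ = u • ((p:ℤ)^k • d) + v • ((m:ℤ) • d) := by rw [hb, ha]
    _ = ((p:ℤ)^k * u + (m:ℤ) * v) • d := by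
        rw [← mul_smul, ← mul_smul, ← add_smul, mul_comm u, mul_comm v]
    _ = d := by rw [huv, one_smul]

/-- In a torsion-free group with no copy of `ℚ`, for each `g` and `t ∈ ℤ_[p]`
there is at most one `y` with `ψ_{p,t}(y, g)`. -/
theorem psi_unique (p : ℕ) [Fact p.Prime] (G : Type*) [AddCommGroup G]
    (hG : IsTorsionFreeGroup G) (hQ : ¬ ContainsCopy ℚ G)
    (g : G) (t : ℤ_[p]) :
    ∀ y₁ y₂ : G, PsiFormula p t y₁ g → PsiFormula p t y₂ g → y₁ = y₂ := by
  intro y₁ y₂ h₁ h₂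
  exact psi_unique' p G hG hQ g t y₁ y₂ h₁ h₂
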